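/- arXiv:2204.00085 — 5 statements merged into one kernel-verified Lean document; each statement's English description precedes it below -/
import Mathlib

section
/- Let Z⁺ : ℝ² → ℝ² be a locally Lipschitz vector field satisfying Z⁺(x,y) = (−y + o(‖(x,y)‖), x + o(‖(x,y)‖)) as (x,y) → (0,0), and define Z⁻(x,y) := (−Z⁺₁(x,−y), Z⁺₂(x,−y)) (so that the piecewise system Z given by Z⁺ on {y>0} and Z⁻ on {y<0} is invariant under the reversibility (x,y,t) ↦ (x,−y,−t)). Then the origin is a crossing center of Z. -/
open Asymptotics

/-- A crossing periodic orbit of the piecewise system given by `Zp` on `{h > 0}`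
and `Zm` on `{h < 0}`, with separation line `{h = 0}`. -/
structure IsCrossingPeriodicOrbit (Zp Zm : ℝ × ℝ → ℝ × ℝ) (h : ℝ × ℝ → ℝ)
    (γ : ℝ → ℝ × ℝ) (T : ℝ) : Prop where
  T_pos : 0 < T
  periodic : Function.Periodic γ T
  continuous : Continuous γ
  nonconst : ∃ t s, γ t ≠ γ s
  derivPlus : ∀ t, 0 < h (γ t) → HasDerivAt γ (Zp (γ t)) t
  derivMinus : ∀ t, h (γ t) < 0 → HasDerivAt γ (Zm (γ t)) t
  finiteCross : {t ∈ Set.Ico (0 : ℝ) T | h (γ t) = 0}.Finite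

/-- The origin is a crossing center: every small enough nonzero point of the
separation line `{h = 0}` lies on a crossing periodic orbit. -/
def IsCrossingCenter (Zp Zm : ℝ × ℝ → ℝ × ℝ) (h : ℝ × ℝ → ℝ) : Prop :=
  ∃ ε > (0 : ℝ), ∀ p : ℝ × ℝ, h p = 0 → 0 < ‖p‖ → ‖p‖ < ε →
    ∃ γ T, IsCrossingPeriodicOrbit Zp Zm h γ T ∧ p ∈ Set.range γ


variable {E₀ : Type*}

section AuxiliaryForCrossingCenter


open Set Metric NNReal in
lemma locallyLipschitz_lipschitzOnWith_of_isCompact {E F : Type*} [MetricSpace E] [MetricSpace F]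
    {f : E → F} (hf : LocallyLipschitz f) {K : Set E} (hK : IsCompact K) :
    ∃ L : NNReal, LipschitzOnWith L f K := by
  have hcont := hf.continuous
  rcases K.eq_empty_or_nonempty with rfl | hne
  · exact ⟨1, by simp [LipschitzOnWith]⟩
  choose Lx tx htx hfx using hf
  choose rx hrx hball using fun x => Metric.mem_nhds_iff.mp (htx x)
  obtain ⟨s, hsK, hcov⟩ := hK.elim_nhds_subcover (fun x => ball x (rx x / 2))
    (fun x _ => ball_mem_nhds x (half_pos (hrx x)))
  rcases s.eq_empty_or_nonempty with rfl | hsne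
  · obtain ⟨x, hx⟩ := hne
    exact absurd (hcov hx) (by simp)
  obtain ⟨M, hM⟩ := Metric.isBounded_iff.mp (hK.image hcont).isBounded
  set ε : ℝ := s.inf' hsne (fun x => rx x / 2) with hε
  have hε0 : 0 < ε := (Finset.lt_inf'_iff hsne).mpr (fun x _ => half_pos (hrx x))
  set Mε : ℝ := max M 0 / ε with hMεdef
  have hMε : 0 ≤ Mε := div_nonneg (le_max_right M 0) hε0.le
  set Ls : ℝ := s.sup' hsne (fun x => (Lx x : ℝ)) with hLsdef
  have hLs : 0 ≤ Ls := le_trans (Lx hsne.choose).coe_nonneg (Finset.le_sup' (fun x => (Lx x : ℝ)) hsne.choose_spec)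
  refine ⟨Real.toNNReal (max Ls Mε), LipschitzOnWith.of_dist_le_mul fun x hx y hy => ?_⟩
  have hcoe : (Real.toNNReal (max Ls Mε) : ℝ) = max Ls Mε :=
    Real.coe_toNNReal _ (le_max_iff.mpr (Or.inl hLs))
  rw [hcoe]
  rcases lt_or_ge (dist x y) ε with hlt | hge
  · obtain ⟨z, hz, hxz⟩ := Set.mem_iUnion₂.mp (hcov hx)
    have hεz : ε ≤ rx z / 2 := Finset.inf'_le _ hz
    have hxz' := mem_ball.mp hxz
    have hxt : x ∈ tx z := hball z (lt_of_lt_of_le hxz' (by linarith))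
    have hyt : y ∈ tx z := by
      apply hball z
      have htri : dist y z ≤ dist y x + dist x z := dist_triangle y x z
      rw [dist_comm] at hlt
      rw [mem_ball]
      linarith
    calc dist (f x) (f y) ≤ (Lx z : ℝ) * dist x y := (hfx z).dist_le_mul x hxt y hyt
    _ ≤ max Ls Mε * dist x y := by
        apply mul_le_mul_of_nonneg_right _ dist_nonneg
        exact le_max_iff.mpr (Or.inl (Finset.le_sup' (fun x => (Lx x : ℝ)) hz))
  · have hkey : Mε * ε = max M 0 := div_mul_cancel₀ _ hε0.ne'
    calc dist (f x) (f y) ≤ M := hM (Set.mem_image_of_mem f hx) (Set.mem_image_of_mem f hy)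
    _ ≤ Mε * ε := by rw [hkey]; exact le_max_left _ _
    _ ≤ max Ls Mε * dist x y :=
        mul_le_mul (le_max_right _ _) hge hε0.le (le_trans hMε (le_max_right _ _))

variable {E : Type*} [NormedAddCommGroup E] [NormedSpace ℝ E]

open Set Metric in
noncomputable def retr (ρ : ℝ) (x : E) : E := if ‖x‖ ≤ ρ then x else (ρ / ‖x‖) • x

open Set Metric in
lemma retr_eq_self {ρ : ℝ} {x : E} (h : ‖x‖ ≤ ρ) : retr ρ x = x := if_pos h

open Set Metric in
lemma norm_retr_le_norm {ρ : ℝ} (hρ : 0 ≤ ρ) (x : E) : ‖retr ρ x‖ ≤ ‖x‖ := by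
  unfold retr; split_ifs with h
  · exact le_refl _
  · push_neg at h
    rw [norm_smul, Real.norm_eq_abs, abs_of_nonneg (div_nonneg hρ (norm_nonneg x))]
    rw [div_mul_cancel₀ _ (lt_of_le_of_lt hρ h).ne']
    linarith

open Set Metric in
lemma norm_retr_le {ρ : ℝ} (hρ : 0 ≤ ρ) (x : E) : ‖retr ρ x‖ ≤ ρ := by
  unfold retr; split_ifs with h
  · exact h
  · push_neg at h
    rw [norm_smul, Real.norm_eq_abs, abs_of_nonneg (div_nonneg hρ (norm_nonneg x))]
    rw [div_mul_cancel₀ _ (lt_of_le_of_lt hρ h).ne']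

open Set Metric in
lemma retr_lip_aux {ρ : ℝ} (hρ : 0 ≤ ρ) {x y : E} (hxy : ‖x‖ ≤ ‖y‖) :
    ‖retr ρ x - retr ρ y‖ ≤ 2 * ‖x - y‖ := by
  by_cases hy : ‖y‖ ≤ ρ
  · rw [retr_eq_self (hxy.trans hy), retr_eq_self hy]
    linarith [norm_nonneg (x - y)]
  push_neg at hy
  have hy0 : 0 < ‖y‖ := lt_of_le_of_lt hρ hy
  have hns : ‖y‖ - ‖x‖ ≤ ‖x - y‖ := by
    have := norm_sub_norm_le y x
    rwa [norm_sub_rev y x] at this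
  by_cases hx : ‖x‖ ≤ ρ
  · rw [retr_eq_self hx, retr, if_neg (not_le.mpr hy)]
    have h1 : ‖x - (ρ / ‖y‖) • y‖ ≤ ‖x - y‖ + ‖y - (ρ / ‖y‖) • y‖ := by
      calc ‖x - (ρ / ‖y‖) • y‖ = ‖(x - y) + (y - (ρ / ‖y‖) • y)‖ := by rw [sub_add_sub_cancel]
      _ ≤ _ := norm_add_le _ _
    have h2 : ‖y - (ρ / ‖y‖) • y‖ = ‖y‖ - ρ := by
      have : y - (ρ / ‖y‖) • y = (1 - ρ / ‖y‖) • y := by module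
      rw [this, norm_smul, Real.norm_eq_abs,
        abs_of_nonneg (by rw [sub_nonneg]; exact (div_le_one hy0).mpr hy.le)]
      field_simp
    rw [h2] at h1
    linarith
  · push_neg at hx
    have hx0 : 0 < ‖x‖ := lt_of_le_of_lt hρ hx
    rw [retr, retr, if_neg (not_le.mpr hx), if_neg (not_le.mpr hy)]
    have hsplit : (ρ / ‖x‖) • x - (ρ / ‖y‖) • y
        = (ρ / ‖x‖) • (x - y) + (ρ / ‖x‖ - ρ / ‖y‖) • y := by module
    rw [hsplit]
    have hd1 : 0 ≤ ρ / ‖x‖ := div_nonneg hρ hx0.le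
    have hd2 : ρ / ‖x‖ ≤ 1 := (div_le_one hx0).mpr hx.le
    have hdd : ρ / ‖y‖ ≤ ρ / ‖x‖ := by gcongr
    have hA : ‖(ρ / ‖x‖) • (x - y)‖ ≤ ‖x - y‖ := by
      rw [norm_smul, Real.norm_eq_abs, abs_of_nonneg hd1]
      exact mul_le_of_le_one_left (norm_nonneg _) hd2
    have hB : ‖(ρ / ‖x‖ - ρ / ‖y‖) • y‖ ≤ ‖x - y‖ := by
      rw [norm_smul, Real.norm_eq_abs, abs_of_nonneg (sub_nonneg.mpr hdd)]
      have heq : (ρ / ‖x‖ - ρ / ‖y‖) * ‖y‖ = (ρ / ‖x‖) * (‖y‖ - ‖x‖) := by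
        field_simp
      rw [heq]
      calc (ρ / ‖x‖) * (‖y‖ - ‖x‖) ≤ 1 * (‖y‖ - ‖x‖) :=
        mul_le_mul_of_nonneg_right hd2 (by linarith)
      _ ≤ ‖x - y‖ := by linarith
    calc ‖(ρ / ‖x‖) • (x - y) + (ρ / ‖x‖ - ρ / ‖y‖) • y‖
        ≤ ‖(ρ / ‖x‖) • (x - y)‖ + ‖(ρ / ‖x‖ - ρ / ‖y‖) • y‖ := norm_add_le _ _
      _ ≤ 2 * ‖x - y‖ := by linarith

open Set Metric in
lemma retr_lip {ρ : ℝ} (hρ : 0 ≤ ρ) (x y : E) : ‖retr ρ x - retr ρ y‖ ≤ 2 * ‖x - y‖ := by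
  rcases le_total ‖x‖ ‖y‖ with h | h
  · exact retr_lip_aux hρ h
  · rw [norm_sub_rev, norm_sub_rev x y]
    exact retr_lip_aux hρ h

set_option maxHeartbeats 2000000 in
open Set Metric Real in
lemma arc_lemma (W : ℝ × ℝ → ℝ × ℝ) (hW : LocallyLipschitz W) (r : ℝ) (hr : 0 < r)
    (hsmall : ∀ q : ℝ × ℝ, ‖q‖ ≤ r → ‖W q - (-q.2, q.1)‖ ≤ (1/1000000000) * ‖q‖)
    (a : ℝ) (ha : 0 < a) (har : a < r / 1000000) :
    ∃ τ : ℝ, 0 < τ ∧ ∃ u : ℝ → ℝ × ℝ,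
      ContinuousOn u (Icc 0 τ) ∧ (∀ t ∈ Ioo 0 τ, HasDerivAt u (W (u t)) t) ∧
      u 0 = (a, 0) ∧ (u τ).2 = 0 ∧ (u τ).1 < 0 ∧ ∀ t ∈ Ioo 0 τ, 0 < (u t).2 := by
  have normJ : ∀ q : ℝ × ℝ, ‖((-q.2, q.1) : ℝ × ℝ)‖ = ‖q‖ := by
    intro q; simp [Prod.norm_def, max_comm]
  set δs : ℝ := 1/1000000000 with hδs
  -- the retracted field
  set Wt : ℝ × ℝ → ℝ × ℝ := fun q => W (retr r q) with hWt
  have hret_mem : ∀ q : ℝ × ℝ, ‖retr r q‖ ≤ r := fun q => norm_retr_le hr.le q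
  have hWnorm : ∀ q : ℝ × ℝ, ‖q‖ ≤ r → ‖W q‖ ≤ 2 * ‖q‖ := by
    intro q hq
    calc ‖W q‖ = ‖(W q - (-q.2, q.1)) + (-q.2, q.1)‖ := by rw [sub_add_cancel]
    _ ≤ ‖W q - (-q.2, q.1)‖ + ‖((-q.2, q.1) : ℝ × ℝ)‖ := norm_add_le _ _
    _ ≤ δs * ‖q‖ + ‖q‖ := by rw [normJ]; exact add_le_add_left (hsmall q hq) _
    _ ≤ 2 * ‖q‖ := by rw [hδs]; nlinarith [norm_nonneg q]
  have hWt_norm : ∀ q : ℝ × ℝ, ‖Wt q‖ ≤ 2 * ‖q‖ := fun q =>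
    (hWnorm _ (hret_mem q)).trans (by nlinarith [norm_retr_le_norm hr.le q])
  have hWt_bdd : ∀ q : ℝ × ℝ, ‖Wt q‖ ≤ 2 * r := fun q =>
    (hWnorm _ (hret_mem q)).trans (by nlinarith [hret_mem q])
  obtain ⟨L0, hL0⟩ := locallyLipschitz_lipschitzOnWith_of_isCompact hW
    (isCompact_closedBall (0 : ℝ × ℝ) r)
  have hWt_lip : LipschitzWith (2 * L0) Wt := by
    apply LipschitzWith.of_dist_le_mul
    intro x y
    have hx : retr r x ∈ closedBall (0 : ℝ × ℝ) r := mem_closedBall_zero_iff.mpr (hret_mem x)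
    have hy : retr r y ∈ closedBall (0 : ℝ × ℝ) r := mem_closedBall_zero_iff.mpr (hret_mem y)
    calc dist (Wt x) (Wt y) ≤ (L0 : ℝ) * dist (retr r x) (retr r y) :=
      hL0.dist_le_mul _ hx _ hy
    _ ≤ (L0 : ℝ) * (2 * dist x y) := by
        apply mul_le_mul_of_nonneg_left _ L0.coe_nonneg
        rw [dist_eq_norm, dist_eq_norm]
        exact retr_lip hr.le x y
    _ = ((2 * L0 : NNReal) : ℝ) * dist x y := by push_cast; ring
  -- Picard-Lindelöf
  set tmax : ℝ := 9/2 with htmax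
  have hpl : IsPicardLindelof (fun _ q => Wt q) (tmin := 0) (tmax := tmax)
      ⟨0, by rw [htmax]; constructor <;> norm_num⟩ ((a, 0) : ℝ × ℝ)
      (Real.toNNReal (9 * r)) 0 (Real.toNNReal (2 * r)) (2 * L0) :=
    IsPicardLindelof.of_time_independent
      (fun x _ => by rw [Real.coe_toNNReal _ (by positivity)]; exact hWt_bdd x)
      hWt_lip.lipschitzOnWith
      (by
        rw [Real.coe_toNNReal _ (by positivity), Real.coe_toNNReal _ (by positivity)]
        show 2 * r * max (tmax - 0) (0 - 0) ≤ 9 * r - 0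
        rw [htmax, sub_zero, sub_zero, sub_zero, max_eq_left (by norm_num)]; linarith)
  obtain ⟨f, hf0', hfd⟩ := hpl.exists_eq_forall_mem_Icc_hasDerivWithinAt₀
  have hf0 : f 0 = ((a, 0) : ℝ × ℝ) := hf0'
  have hfc : ContinuousOn f (Icc 0 tmax) := fun t ht => (hfd t ht).continuousWithinAt
  have hnorm_a0 : ‖((a, 0) : ℝ × ℝ)‖ = a := by simp [Prod.norm_def, abs_of_pos ha, ha.le]
  -- Gronwall 1 : norm bound
  have hderiv_Ici : ∀ t ∈ Ico 0 tmax, HasDerivWithinAt f (Wt (f t)) (Ici t) t := by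
    intro t ht
    refine (hfd t (Ico_subset_Icc_self ht)).mono_of_mem_nhdsWithin ?_
    refine Filter.mem_of_superset (inter_mem_nhdsWithin (Ici t) (Iic_mem_nhds ht.2)) ?_
    exact fun x hx => ⟨le_trans ht.1 hx.1, hx.2⟩
  have hgron1 := norm_le_gronwallBound_of_norm_deriv_right_le (f := f)
    (f' := fun t => Wt (f t)) (δ := a) (K := 2) (ε := 0) (a := 0) (b := tmax)
    hfc hderiv_Ici (le_of_eq (by rw [hf0, hnorm_a0])) (fun t _ => by simpa using hWt_norm (f t))
  have hexp9 : Real.exp 9 ≤ 8104 := by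
    have h1 : Real.exp 9 = Real.exp 1 ^ (9 : ℕ) := by
      rw [← Real.exp_nat_mul]; norm_num
    have h2 := Real.exp_one_lt_d9
    rw [h1]
    calc Real.exp 1 ^ (9:ℕ) ≤ 2.7182818286 ^ (9:ℕ) :=
      pow_le_pow_left₀ (Real.exp_pos 1).le h2.le 9
    _ ≤ 8104 := by norm_num
  have hfnorm : ∀ t ∈ Icc 0 tmax, ‖f t‖ ≤ 8104 * a := by
    intro t ht
    have := hgron1 t ht
    rw [sub_zero, gronwallBound_ε0] at this
    have hle : Real.exp (2 * t) ≤ Real.exp 9 :=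
      Real.exp_le_exp.mpr (by rw [htmax] at ht; linarith [ht.2])
    nlinarith [this, Real.exp_pos (2*t)]
  have hfr : ∀ t ∈ Icc 0 tmax, ‖f t‖ ≤ r := by
    intro t ht
    calc ‖f t‖ ≤ 8104 * a := hfnorm t ht
    _ ≤ r := by nlinarith
  have hWtf : ∀ t ∈ Icc 0 tmax, Wt (f t) = W (f t) := by
    intro t ht
    show W (retr r (f t)) = W (f t)
    rw [retr_eq_self (hfr t ht)]
  -- deviation from the circle, Gronwall 2
  set ec : ℝ → ℝ × ℝ := fun t => (Real.cos t, Real.sin t) with hec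
  set D : ℝ → ℝ × ℝ := fun t => f t - a • ec t with hD
  have hecd : ∀ t : ℝ, HasDerivAt ec (-Real.sin t, Real.cos t) t := fun t =>
    (Real.hasDerivAt_cos t).prodMk (Real.hasDerivAt_sin t)
  have hDd : ∀ t ∈ Icc 0 tmax,
      HasDerivWithinAt D (W (f t) - a • (-Real.sin t, Real.cos t)) (Icc 0 tmax) t := by
    intro t ht
    have h1 := hfd t ht
    rw [hWtf t ht] at h1
    exact h1.sub ((hecd t).const_smul a).hasDerivWithinAt
  have hgbd : ∀ t ∈ Icc 0 tmax, ‖W (f t) - (-(f t).2, (f t).1)‖ ≤ δs * (8104 * a) := by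
    intro t ht
    refine (hsmall _ (hfr t ht)).trans ?_
    have := hfnorm t ht
    rw [hδs]; nlinarith
  have hkey : ∀ t : ℝ, W (f t) - a • (-Real.sin t, Real.cos t)
      = (W (f t) - (-(f t).2, (f t).1)) + (-(D t).2, (D t).1) := by
    intro t
    refine Prod.ext ?_ ?_ <;> simp [hD, hec] <;> ring
  have hD0 : D 0 = 0 := by
    refine Prod.ext ?_ ?_ <;> simp [hD, hec, hf0]
  have hDc : ContinuousOn D (Icc 0 tmax) :=
    hfc.sub ((Continuous.continuousOn (by fun_prop)))
  have hDIci : ∀ t ∈ Ico 0 tmax,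
      HasDerivWithinAt D (W (f t) - a • (-Real.sin t, Real.cos t)) (Ici t) t := by
    intro t ht
    refine (hDd t (Ico_subset_Icc_self ht)).mono_of_mem_nhdsWithin ?_
    refine Filter.mem_of_superset (inter_mem_nhdsWithin (Ici t) (Iic_mem_nhds ht.2)) ?_
    exact fun x hx => ⟨le_trans ht.1 hx.1, hx.2⟩
  have hgron2 := norm_le_gronwallBound_of_norm_deriv_right_le (f := D)
    (f' := fun t => W (f t) - a • (-Real.sin t, Real.cos t)) (δ := 0) (K := 1)
    (ε := δs * (8104 * a)) (a := 0) (b := tmax) hDc hDIci (by rw [hD0]; simp)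
    (by
      intro t ht
      show ‖W (f t) - a • (-Real.sin t, Real.cos t)‖ ≤ 1 * ‖D t‖ + δs * (8104 * a)
      rw [hkey t]
      calc ‖(W (f t) - (-(f t).2, (f t).1)) + ((-(D t).2, (D t).1) : ℝ × ℝ)‖
          ≤ ‖W (f t) - (-(f t).2, (f t).1)‖ + ‖((-(D t).2, (D t).1) : ℝ × ℝ)‖ := norm_add_le _ _
        _ ≤ δs * (8104 * a) + ‖D t‖ := by
            rw [normJ (D t)]
            exact add_le_add_left (hgbd t (Ico_subset_Icc_self ht)) _
        _ = 1 * ‖D t‖ + δs * (8104 * a) := by ring)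
  have hexp45 : Real.exp tmax ≤ 149 := by
    have h1 : Real.exp 5 = Real.exp 1 ^ (5 : ℕ) := by
      rw [← Real.exp_nat_mul]; norm_num
    have h2 := Real.exp_one_lt_d9
    have h3 : Real.exp tmax ≤ Real.exp 5 := Real.exp_le_exp.mpr (by rw [htmax]; norm_num)
    refine h3.trans ?_
    rw [h1]
    calc Real.exp 1 ^ (5:ℕ) ≤ 2.7182818286 ^ (5:ℕ) :=
      pow_le_pow_left₀ (Real.exp_pos 1).le h2.le 5
    _ ≤ 149 := by norm_num
  have hDbound : ∀ t ∈ Icc 0 tmax, ‖D t‖ ≤ a / 500 := by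
    intro t ht
    have h1 := hgron2 t ht
    rw [sub_zero, gronwallBound_of_K_ne_0 one_ne_zero] at h1
    have h2 : Real.exp (1 * t) ≤ 149 := by
      rw [one_mul]
      exact (Real.exp_le_exp.mpr ht.2).trans hexp45
    have h3 : (0:ℝ) < Real.exp (1 * t) := Real.exp_pos _
    rw [hδs] at h1
    nlinarith
  -- componentwise estimates
  have hsin : ∀ t ∈ Icc 0 tmax, |(f t).2 - a * Real.sin t| ≤ a / 500 := by
    intro t ht
    have h1 : (D t).2 = (f t).2 - a * Real.sin t := by simp [hD, hec]
    have := (norm_snd_le (D t)).trans (hDbound t ht)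
    rwa [h1] at this
  have hcos1 : ∀ t ∈ Icc 0 tmax, |(f t).1 - a * Real.cos t| ≤ a / 500 := by
    intro t ht
    have h1 : (D t).1 = (f t).1 - a * Real.cos t := by simp [hD, hec]
    have := (norm_fst_le (D t)).trans (hDbound t ht)
    rwa [h1] at this
  have hder2 : ∀ t ∈ Icc 0 tmax, |(W (f t)).2 - a * Real.cos t| ≤ a / 100 := by
    intro t ht
    have h1 : |(W (f t)).2 - (f t).1| ≤ δs * (8104 * a) := by
      have h2 : (W (f t) - (-(f t).2, (f t).1)).2 = (W (f t)).2 - (f t).1 := by simp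
      have := (norm_snd_le (W (f t) - (-(f t).2, (f t).1))).trans (hgbd t ht)
      rwa [h2] at this
    have h3 := hcos1 t ht
    have h4 : (W (f t)).2 - a * Real.cos t
        = ((W (f t)).2 - (f t).1) + ((f t).1 - a * Real.cos t) := by ring
    rw [h4]
    refine (abs_add_le _ _).trans ?_
    rw [hδs] at h1
    nlinarith
  -- trigonometric sign facts
  have hπ3 : (3:ℝ) < π := Real.pi_gt_three
  have hπ4 : π < 3.15 := Real.pi_lt_d2
  have hsqrt3 : (1:ℝ) ≤ Real.sqrt 3 := by
    rw [show (1:ℝ) = Real.sqrt 1 by simp]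
    exact Real.sqrt_le_sqrt (by norm_num)
  have hcosA : ∀ x ∈ Icc 0 (π/3), 1/2 ≤ Real.cos x := by
    intro x hx
    rw [← Real.cos_pi_div_three]
    exact Real.cos_le_cos_of_nonneg_of_le_pi hx.1 (by linarith) hx.2
  have hcosBC' : ∀ x ∈ Icc (2*π/3) π, Real.cos x ≤ -(1/2) := by
    intro x hx
    have h1 : Real.cos x ≤ Real.cos (2*π/3) :=
      Real.cos_le_cos_of_nonneg_of_le_pi (by linarith [hx.1]) hx.2 hx.1
    have h2 : Real.cos (2*π/3) = -(1/2) := by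
      rw [show (2*π/3 : ℝ) = π - π/3 by ring, Real.cos_pi_sub, Real.cos_pi_div_three]
    linarith
  have hcosBC : ∀ x ∈ Icc (2*π/3) (4*π/3), Real.cos x ≤ -(1/2) := by
    intro x hx
    rcases le_total x π with h | h
    · exact hcosBC' x ⟨hx.1, h⟩
    · have h1 : Real.cos (2*π - x) ≤ -(1/2) := hcosBC' _ ⟨by linarith [hx.2], by linarith⟩
      rwa [Real.cos_two_pi_sub] at h1
  have hsinAB' : ∀ x ∈ Icc (π/3) (π/2), 1/2 ≤ Real.sin x := by
    intro x hx
    have h1 : Real.sin (π/3) ≤ Real.sin x :=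
      Real.sin_le_sin_of_le_of_le_pi_div_two (by linarith [hx.1]) hx.2 hx.1
    rw [Real.sin_pi_div_three] at h1
    linarith
  have hsinAB : ∀ x ∈ Icc (π/3) (2*π/3), 1/2 ≤ Real.sin x := by
    intro x hx
    rcases le_total x (π/2) with h | h
    · exact hsinAB' x ⟨hx.1, h⟩
    · have h1 := hsinAB' (π - x) ⟨by linarith [hx.2], by linarith⟩
      rwa [Real.sin_pi_sub] at h1
  have hsinC : Real.sin (4*π/3) ≤ -(1/2) := by
    rw [show (4*π/3 : ℝ) = π/3 + π by ring, Real.sin_add_pi, Real.sin_pi_div_three]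
    linarith
  -- interval inclusions
  have hAt : π/3 < tmax := by rw [htmax]; linarith
  have hBt : 2*π/3 < tmax := by rw [htmax]; linarith
  have hCt : 4*π/3 < tmax := by rw [htmax]; linarith
  have hA0 : 0 < π/3 := by linarith
  -- derivative of second component
  have hfd2 : ∀ t ∈ Ioo 0 tmax, HasDerivAt (fun s => (f s).2) ((W (f t)).2) t := by
    intro t ht
    have h1 := (hfd t (Ioo_subset_Icc_self ht)).hasDerivAt (Icc_mem_nhds ht.1 ht.2)
    rw [hWtf t (Ioo_subset_Icc_self ht)] at h1
    simpa [Function.comp_def] using (ContinuousLinearMap.snd ℝ ℝ ℝ).hasFDerivAt.comp_hasDerivAt t h1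
  have hfc2 : ContinuousOn (fun s => (f s).2) (Icc 0 tmax) :=
    continuous_snd.comp_continuousOn hfc
  -- strict monotonicity on [0, π/3]
  have s1 : StrictMonoOn (fun s => (f s).2) (Icc 0 (π/3)) := by
    apply strictMonoOn_of_deriv_pos (convex_Icc 0 (π/3))
      (hfc2.mono (Icc_subset_Icc le_rfl hAt.le))
    intro x hx
    rw [interior_Icc] at hx
    have hx' : x ∈ Ioo 0 tmax := ⟨hx.1, hx.2.trans hAt⟩
    rw [(hfd2 x hx').deriv]
    have h1 := hder2 x (Ioo_subset_Icc_self hx')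
    have h2 := hcosA x ⟨hx.1.le, hx.2.le⟩
    have := abs_le.mp h1
    nlinarith
  have hpos1 : ∀ t ∈ Ioc 0 (π/3), 0 < (f t).2 := by
    intro t ht
    have h1 := s1 (left_mem_Icc.mpr hA0.le) ⟨ht.1.le, ht.2⟩ ht.1
    simpa [hf0] using h1
  have hpos2 : ∀ t ∈ Icc (π/3) (2*π/3), 0 < (f t).2 := by
    intro t ht
    have h1 := hsin t ⟨by linarith [ht.1], by rw [htmax]; linarith [ht.2, hπ4]⟩
    have h2 := hsinAB t ht
    have := abs_le.mp h1
    nlinarith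
  have s2 : StrictAntiOn (fun s => (f s).2) (Icc (2*π/3) (4*π/3)) := by
    apply strictAntiOn_of_deriv_neg (convex_Icc _ _)
      (hfc2.mono (Icc_subset_Icc (by linarith) hCt.le))
    intro x hx
    rw [interior_Icc] at hx
    have hx' : x ∈ Ioo 0 tmax := ⟨by linarith [hx.1], hx.2.trans hCt⟩
    rw [(hfd2 x hx').deriv]
    have h1 := hder2 x (Ioo_subset_Icc_self hx')
    have h2 := hcosBC x ⟨hx.1.le, hx.2.le⟩
    have := abs_le.mp h1
    nlinarith
  have hfB : 0 < (f (2*π/3)).2 := hpos2 _ ⟨by linarith, le_rfl⟩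
  have hfC : (f (4*π/3)).2 < 0 := by
    have h1 := hsin (4*π/3) ⟨by linarith, hCt.le⟩
    have := abs_le.mp h1
    nlinarith [hsinC]
  -- intermediate value: the return time τ
  have hivt := intermediate_value_Icc' (by linarith : (2*π/3 : ℝ) ≤ 4*π/3)
    (hfc2.mono (Icc_subset_Icc (by linarith) hCt.le))
  obtain ⟨τ, hτm, hτ0⟩ := hivt ⟨hfC.le, hfB.le⟩
  have hτ0' : (f τ).2 = 0 := hτ0
  have hτB : 2*π/3 < τ := by
    rcases lt_or_eq_of_le hτm.1 with h | h
    · exact h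
    · exfalso; rw [← h] at hτ0'; linarith
  have hτC : τ < 4*π/3 := by
    rcases lt_or_eq_of_le hτm.2 with h | h
    · exact h
    · exfalso; rw [h] at hτ0'; linarith
  have hτt : τ < tmax := hτC.trans hCt
  refine ⟨τ, by linarith, f, ?_, ?_, hf0, hτ0', ?_, ?_⟩
  · exact hfc.mono (Icc_subset_Icc le_rfl hτt.le)
  · intro t ht
    have ht' : t ∈ Icc 0 tmax := ⟨ht.1.le, by linarith [ht.2]⟩
    have h1 := (hfd t ht').hasDerivAt (Icc_mem_nhds ht.1 (by linarith [ht.2]))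
    rwa [hWtf t ht'] at h1
  · have h1 := hcos1 τ ⟨by linarith, hτt.le⟩
    have h2 := hcosBC τ ⟨hτB.le, hτC.le⟩
    have := abs_le.mp h1
    nlinarith
  · intro t ht
    rcases le_or_gt t (π/3) with h | h
    · exact hpos1 t ⟨ht.1, h⟩
    rcases le_or_gt t (2*π/3) with h2 | h2
    · exact hpos2 t ⟨h.le, h2⟩
    · have h3 := s2 ⟨h2.le, by linarith [ht.2]⟩ ⟨hτB.le, hτC.le⟩ ht.2
      have h4 : (f τ).2 < (f t).2 := h3
      rw [hτ0'] at h4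
      exact h4

set_option maxHeartbeats 2000000 in
open Set Metric Real in
lemma assemble_orbit (Zp : ℝ × ℝ → ℝ × ℝ) (u : ℝ → ℝ × ℝ) (τ : ℝ) (hτ : 0 < τ)
    (hc : ContinuousOn u (Icc 0 τ))
    (hd : ∀ t ∈ Ioo 0 τ, HasDerivAt u (Zp (u t)) t)
    (h02 : (u 0).2 = 0) (hτ2 : (u τ).2 = 0)
    (h01 : 0 < (u 0).1) (hτ1 : (u τ).1 < 0)
    (hpos : ∀ t ∈ Ioo 0 τ, 0 < (u t).2) :
    ∃ γ T, IsCrossingPeriodicOrbit Zp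
      (fun p => (-(Zp (p.1, -p.2)).1, (Zp (p.1, -p.2)).2)) (fun p => p.2) γ T ∧
      u 0 ∈ Set.range γ ∧ u τ ∈ Set.range γ := by
  haveI : Fact (0 < 2*τ) := ⟨by linarith⟩
  -- clamped version of u, continuous on all of ℝ
  set cl : ℝ → ℝ := fun t => max 0 (min t τ) with hcl
  have hclc : Continuous cl := by fun_prop
  have hclmem : ∀ t, cl t ∈ Icc 0 τ :=
    fun t => ⟨le_max_left _ _, max_le hτ.le (min_le_right _ _)⟩
  have hcl_eq : ∀ t ∈ Icc 0 τ, cl t = t := by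
    intro t ht
    rw [hcl]; simp only
    rw [min_eq_left ht.2, max_eq_right ht.1]
  set uc : ℝ → ℝ × ℝ := fun t => u (cl t) with huc
  have hucc : Continuous uc := hc.comp_continuous hclc hclmem
  have huc_eq : ∀ t ∈ Icc 0 τ, uc t = u t := fun t ht => by rw [huc]; simp only; rw [hcl_eq t ht]
  -- the closed curve on one period
  set base : ℝ → ℝ × ℝ :=
    fun t => if t ≤ τ then uc t else ((uc (2*τ - t)).1, -(uc (2*τ - t)).2) with hbase
  have hbasec : Continuous base := by
    rw [hbase]
    apply Continuous.if_le hucc _ continuous_id continuous_const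
    · intro x hx
      have hx' : x = τ := hx
      rw [hx', show (2*τ - τ) = τ by ring, huc_eq τ ⟨hτ.le, le_rfl⟩]
      exact Prod.ext rfl (by rw [hτ2]; ring)
    · fun_prop
  have hbase_eq1 : ∀ t ∈ Icc 0 τ, base t = u t := by
    intro t ht
    rw [hbase]; simp only [if_pos ht.2]; exact huc_eq t ht
  have hbase_eq2 : ∀ t, τ < t → t ≤ 2*τ → base t = ((u (2*τ - t)).1, -(u (2*τ - t)).2) := by
    intro t h1 h2
    have hmem : 2*τ - t ∈ Icc 0 τ := ⟨by linarith, by linarith⟩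
    rw [hbase]; simp only [if_neg (not_le.mpr h1)]
    rw [huc_eq _ hmem]
  have hbase0 : base 0 = u 0 := hbase_eq1 0 ⟨le_rfl, hτ.le⟩
  have hbaseτ : base τ = u τ := hbase_eq1 τ ⟨hτ.le, le_rfl⟩
  have hbase0T : base 0 = base (0 + 2*τ) := by
    rw [zero_add, hbase_eq2 (2*τ) (by linarith) le_rfl, hbase0]
    have h2 : (2*τ - 2*τ) = 0 := by ring
    rw [h2]
    exact Prod.ext rfl (by rw [h02]; ring)
  -- the periodic orbit
  set γ : ℝ → ℝ × ℝ := fun t => AddCircle.liftIco (2*τ) 0 base (t : AddCircle (2*τ)) with hγ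
  have hγeq : ∀ t ∈ Ico (0:ℝ) (2*τ), γ t = base t := by
    intro t ht
    rw [hγ]
    exact AddCircle.liftIco_coe_apply (by rwa [zero_add])
  have haux : ∀ (x : ℝ) (k : ℤ), ((x + 2*τ*k : ℝ) : AddCircle (2*τ)) = (x : AddCircle (2*τ)) := by
    intro x k
    rw [AddCircle.coe_add]
    have h0 : ((2*τ*k : ℝ) : AddCircle (2*τ)) = 0 :=
      (AddCircle.coe_eq_zero_iff (2*τ)).mpr ⟨k, by rw [zsmul_eq_mul]; ring⟩
    rw [h0, add_zero]
  have hshift : ∀ (k : ℤ) (t : ℝ), t - 2*τ*k ∈ Ico 0 (2*τ) → γ t = base (t - 2*τ*k) := by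
    intro k t hmem
    have h1 : ((t : ℝ) : AddCircle (2*τ)) = ((t - 2*τ*k : ℝ) : AddCircle (2*τ)) := by
      have := haux (t - 2*τ*k) k
      rw [show (t - 2*τ*k + 2*τ*k : ℝ) = t by ring] at this
      exact this
    rw [hγ]; simp only; rw [h1]
    exact AddCircle.liftIco_coe_apply (by rwa [zero_add])
  -- floor decomposition
  have hdecomp : ∀ t : ℝ, t - 2*τ*(⌊t/(2*τ)⌋ : ℤ) ∈ Ico (0:ℝ) (2*τ) := by
    intro t
    have h1 : (⌊t/(2*τ)⌋ : ℝ) ≤ t/(2*τ) := Int.floor_le _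
    have h2 : t/(2*τ) < ⌊t/(2*τ)⌋ + 1 := Int.lt_floor_add_one _
    have h3 : 0 < 2*τ := by linarith
    constructor
    · have := mul_le_mul_of_nonneg_left h1 h3.le
      rw [mul_div_cancel₀ _ h3.ne'] at this
      linarith
    · have := mul_lt_mul_of_pos_left h2 h3
      rw [mul_div_cancel₀ _ h3.ne'] at this
      linarith
  -- sign analysis of base on [0, 2τ)
  have hsign_pos : ∀ s ∈ Ico (0:ℝ) (2*τ), 0 < (base s).2 → s ∈ Ioo 0 τ := by
    intro s hs hpos2
    by_cases h : s ≤ τ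
    · rw [hbase_eq1 s ⟨hs.1, h⟩] at hpos2
      constructor
      · rcases eq_or_lt_of_le hs.1 with h0 | h0
        · exfalso; rw [← h0] at hpos2; linarith
        · exact h0
      · rcases eq_or_lt_of_le h with h0 | h0
        · exfalso; rw [h0] at hpos2; linarith
        · exact h0
    · exfalso
      push_neg at h
      rw [hbase_eq2 s h hs.2.le] at hpos2
      have h1 : 2*τ - s ∈ Ioo 0 τ := ⟨by linarith [hs.2], by linarith⟩
      have := hpos _ h1
      simp only at hpos2
      linarith
  have hsign_neg : ∀ s ∈ Ico (0:ℝ) (2*τ), (base s).2 < 0 → (τ < s ∧ s < 2*τ) := by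
    intro s hs hneg2
    by_cases h : s ≤ τ
    · exfalso
      rw [hbase_eq1 s ⟨hs.1, h⟩] at hneg2
      rcases eq_or_lt_of_le hs.1 with h0 | h0
      · rw [← h0] at hneg2; linarith
      rcases eq_or_lt_of_le h with h1 | h1
      · rw [h1] at hneg2; linarith
      · have := hpos s ⟨h0, h1⟩; linarith
    · exact ⟨not_le.mp h, hs.2⟩
  refine ⟨γ, 2*τ, ⟨by linarith, ?_, ?_, ?_, ?_, ?_, ?_⟩, ?_, ?_⟩
  -- periodic
  · intro t
    rw [hγ]; simp only
    rw [AddCircle.coe_add_period]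
  -- continuous
  · rw [hγ]
    exact (AddCircle.liftIco_continuous hbase0T hbasec.continuousOn).comp
      (AddCircle.continuous_mk' (2*τ))
  -- nonconst
  · refine ⟨0, τ, ?_⟩
    rw [hγeq 0 ⟨le_rfl, by linarith⟩, hγeq τ ⟨hτ.le, by linarith⟩, hbase0, hbaseτ]
    intro h
    have := congrArg Prod.fst h
    linarith
  -- derivPlus
  · intro t0 hp0
    set k : ℤ := ⌊t0/(2*τ)⌋ with hk
    set s0 : ℝ := t0 - 2*τ*k with hs0
    have hs0mem : s0 ∈ Ico (0:ℝ) (2*τ) := hdecomp t0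
    have hγt0 : γ t0 = base s0 := hshift k t0 hs0mem
    rw [hγt0] at hp0 ⊢
    have hs0I : s0 ∈ Ioo 0 τ := hsign_pos s0 hs0mem hp0
    have hval : base s0 = u s0 := hbase_eq1 s0 (Ioo_subset_Icc_self hs0I)
    rw [hval]
    have hev : γ =ᶠ[nhds t0] fun t => u (t - 2*τ*k) := by
      refine Filter.eventually_of_mem
        (Ioo_mem_nhds (by linarith [hs0I.1] : 2*τ*k < t0) (by linarith [hs0I.2] : t0 < 2*τ*k + τ)) ?_
      intro t ht
      have h1 : t - 2*τ*k ∈ Ioo 0 τ := ⟨by linarith [ht.1], by linarith [ht.2]⟩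
      rw [hshift k t ⟨h1.1.le, by linarith [h1.2]⟩,
        hbase_eq1 _ (Ioo_subset_Icc_self h1)]
    have hder : HasDerivAt (fun t => u (t - 2*τ*k)) (Zp (u s0)) t0 := by
      have h1 := hd s0 hs0I
      have h2 : HasDerivAt (fun s : ℝ => s - 2*τ*k) 1 t0 := (hasDerivAt_id t0).sub_const _
      have h3 := h1.scomp t0 h2
      simpa [Function.comp_def] using h3
    exact hev.hasDerivAt_iff.mpr hder
  -- derivMinus
  · intro t0 hn0
    set k : ℤ := ⌊t0/(2*τ)⌋ with hk
    set s0 : ℝ := t0 - 2*τ*k with hs0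
    have hs0mem : s0 ∈ Ico (0:ℝ) (2*τ) := hdecomp t0
    have hγt0 : γ t0 = base s0 := hshift k t0 hs0mem
    rw [hγt0] at hn0 ⊢
    have hs0I : τ < s0 ∧ s0 < 2*τ := hsign_neg s0 hs0mem hn0
    set s1 : ℝ := 2*τ - s0 with hs1
    have hs1I : s1 ∈ Ioo 0 τ := ⟨by linarith [hs0I.2], by linarith [hs0I.1]⟩
    have hval : base s0 = ((u s1).1, -(u s1).2) := hbase_eq2 s0 hs0I.1 hs0I.2.le
    set c : ℝ := 2*τ*(k+1) with hc2
    have hev : γ =ᶠ[nhds t0] fun t => ((u (c - t)).1, -(u (c - t)).2) := by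
      refine Filter.eventually_of_mem
        (Ioo_mem_nhds (by linarith [hs0I.1] : 2*τ*k + τ < t0)
          (by linarith [hs0I.2] : t0 < 2*τ*k + 2*τ)) ?_
      intro t ht
      have h1 : t - 2*τ*k ∈ Ico (0:ℝ) (2*τ) := ⟨by linarith [ht.1], by linarith [ht.2]⟩
      rw [hshift k t h1, hbase_eq2 _ (by linarith [ht.1]) (by linarith [ht.2])]
      have h2 : 2*τ - (t - 2*τ*k) = c - t := by rw [hc2]; push_cast; ring
      rw [h2]
    have hs1c : s1 = c - t0 := by rw [hs1, hc2, hs0]; push_cast; ring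
    have hder : HasDerivAt (fun t => ((u (c - t)).1, -(u (c - t)).2))
        ((-(Zp (u s1))).1, -(-(Zp (u s1))).2) t0 := by
      have h1 := hd s1 hs1I
      have h2 : HasDerivAt (fun t : ℝ => c - t) (-1) t0 := (hasDerivAt_id t0).const_sub c
      have h3 : HasDerivAt (fun t => u (c - t)) (-(Zp (u s1))) t0 := by
        rw [hs1c] at h1 ⊢
        have h6 := h1.scomp t0 h2
        simp only [Function.comp_def, neg_one_smul] at h6
        exact h6
      have h4 : HasDerivAt (fun t => (u (c - t)).1) (-(Zp (u s1))).1 t0 := by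
        simpa [Function.comp_def] using (ContinuousLinearMap.fst ℝ ℝ ℝ).hasFDerivAt.comp_hasDerivAt t0 h3
      have h5 : HasDerivAt (fun t => (u (c - t)).2) (-(Zp (u s1))).2 t0 := by
        simpa [Function.comp_def] using (ContinuousLinearMap.snd ℝ ℝ ℝ).hasFDerivAt.comp_hasDerivAt t0 h3
      exact h4.prodMk h5.neg
    have hgoal := hev.hasDerivAt_iff.mpr hder
    have hZm : ((-(Zp (u s1))).1, -(-(Zp (u s1))).2)
        = (-(Zp ((base s0).1, -(base s0).2)).1, (Zp ((base s0).1, -(base s0).2)).2) := by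
      rw [hval]
      simp only [neg_neg, Prod.mk.eta]
      simp [Prod.ext_iff]
    rw [← hZm]
    exact hgoal
  -- finiteCross
  · apply Set.Finite.subset ((Set.finite_singleton τ).insert 0)
    intro t ht
    obtain ⟨htI, ht0⟩ := ht
    have ht0' : (base t).2 = 0 := by rw [← hγeq t htI]; exact ht0
    by_cases h : t ≤ τ
    · rw [hbase_eq1 t ⟨htI.1, h⟩] at ht0'
      rcases eq_or_lt_of_le htI.1 with h0 | h0
      · exact Set.mem_insert_iff.mpr (Or.inl h0.symm)
      rcases eq_or_lt_of_le h with h1 | h1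
      · exact Set.mem_insert_iff.mpr (Or.inr (Set.mem_singleton_iff.mpr h1))
      · exfalso; have := hpos t ⟨h0, h1⟩; linarith
    · exfalso
      push_neg at h
      rw [hbase_eq2 t h htI.2.le] at ht0'
      simp only at ht0'
      have h1 : 2*τ - t ∈ Ioo 0 τ := ⟨by linarith [htI.2], by linarith⟩
      have := hpos _ h1
      linarith
  -- u 0 ∈ range γ
  · exact ⟨0, by rw [hγeq 0 ⟨le_rfl, by linarith⟩, hbase0]⟩
  -- u τ ∈ range γ
  · exact ⟨τ, by rw [hγeq τ ⟨hτ.le, by linarith⟩, hbaseτ]⟩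

set_option maxHeartbeats 2000000 in
open Set Metric Real in
lemma crossing_center_aux
    (Zp : ℝ × ℝ → ℝ × ℝ) (hLip : LocallyLipschitz Zp)
    (hLin : (fun p : ℝ × ℝ => Zp p - (-p.2, p.1)) =o[nhds 0] fun p : ℝ × ℝ => ‖p‖) :
    IsCrossingCenter Zp
      (fun p => (-(Zp (p.1, -p.2)).1, (Zp (p.1, -p.2)).2)) (fun p => p.2) := by
  have hδ : (0:ℝ) < 1/1000000000 := by norm_num
  have h1 := hLin.def hδ
  obtain ⟨r0, hr0, hball⟩ := Metric.eventually_nhds_iff.mp h1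
  set r : ℝ := r0/2 with hrdef
  have hr : 0 < r := by rw [hrdef]; linarith
  have hsmall : ∀ q : ℝ × ℝ, ‖q‖ ≤ r → ‖Zp q - (-q.2, q.1)‖ ≤ (1/1000000000) * ‖q‖ := by
    intro q hq
    have h2 := hball (y := q) (by rw [dist_zero_right]; rw [hrdef] at hq; linarith)
    simpa [Real.norm_eq_abs, abs_of_nonneg (norm_nonneg q)] using h2
  refine ⟨r/1000000, by positivity, ?_⟩
  intro p hp2 hppos hplt
  have hp2' : p.2 = 0 := hp2
  have hp : p = (p.1, 0) := Prod.ext rfl hp2'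
  have hnp : ‖p‖ = |p.1| := by rw [hp]; simp [Prod.norm_def]
  have hp1ne : p.1 ≠ 0 := by
    intro h; rw [hnp, h] at hppos; simp at hppos
  rcases hp1ne.lt_or_gt with hneg | hpos
  · -- p.1 < 0 : use the conjugated field
    set W : ℝ × ℝ → ℝ × ℝ := fun q => ((Zp (-q.1, q.2)).1, -(Zp (-q.1, q.2)).2) with hW
    have hS : LipschitzWith 1 (fun q : ℝ × ℝ => ((-q.1, q.2) : ℝ × ℝ)) := by
      apply LipschitzWith.of_dist_le_mul
      intro x y
      simp only [Prod.dist_eq, Real.dist_eq, NNReal.coe_one, one_mul]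
      have : |(-x.1) - (-y.1)| = |x.1 - y.1| := by rw [show (-x.1) - (-y.1) = -(x.1 - y.1) by ring, abs_neg]
      rw [this]
    have hN : LipschitzWith 1 (fun v : ℝ × ℝ => ((v.1, -v.2) : ℝ × ℝ)) := by
      apply LipschitzWith.of_dist_le_mul
      intro x y
      simp only [Prod.dist_eq, Real.dist_eq, NNReal.coe_one, one_mul]
      have : |(-x.2) - (-y.2)| = |x.2 - y.2| := by rw [show (-x.2) - (-y.2) = -(x.2 - y.2) by ring, abs_neg]
      rw [this]
    have hWlip : LocallyLipschitz W :=
      (hN.locallyLipschitz.comp hLip).comp hS.locallyLipschitz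
    have hSnorm : ∀ q : ℝ × ℝ, ‖((-q.1, q.2) : ℝ × ℝ)‖ = ‖q‖ := by
      intro q; simp [Prod.norm_def]
    have hWsmall : ∀ q : ℝ × ℝ, ‖q‖ ≤ r → ‖W q - (-q.2, q.1)‖ ≤ (1/1000000000) * ‖q‖ := by
      intro q hq
      have h2 := hsmall (-q.1, q.2) (by rw [hSnorm q]; exact hq)
      have h3 : ‖W q - ((-q.2, q.1) : ℝ × ℝ)‖
          = ‖Zp (-q.1, q.2) - ((-q.2, -q.1) : ℝ × ℝ)‖ := by
        simp only [hW, Prod.norm_def, Prod.fst_sub, Prod.snd_sub, Real.norm_eq_abs]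
        congr 1
        rw [show -(Zp (-q.1, q.2)).2 - q.1 = -((Zp (-q.1, q.2)).2 - -q.1) by ring, abs_neg]
      rw [h3]
      simpa [hSnorm q] using h2
    have ha : 0 < -p.1 := by linarith
    have har : -p.1 < r / 1000000 := by
      have : |p.1| = -p.1 := abs_of_neg hneg
      rw [← this, ← hnp]; exact hplt
    obtain ⟨τ, hτ, w, hcw, hdw, hw0, hwτ2, hwτ1, hwpos⟩ :=
      arc_lemma W hWlip r hr hWsmall (-p.1) ha har
    set u : ℝ → ℝ × ℝ := fun t => (-(w (τ - t)).1, (w (τ - t)).2) with hu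
    have hmap : MapsTo (fun t => τ - t) (Icc 0 τ) (Icc (0:ℝ) τ) := by
      intro t ht
      simp only [Set.mem_Icc] at ht ⊢
      constructor <;> linarith
    have hcu : ContinuousOn u (Icc 0 τ) := by
      have hcw2 : ContinuousOn (fun t => w (τ - t)) (Icc 0 τ) :=
        hcw.comp ((continuous_const.sub continuous_id).continuousOn) hmap
      exact (Continuous.comp_continuousOn
        (by fun_prop : Continuous fun v : ℝ × ℝ => ((-v.1, v.2) : ℝ × ℝ)) hcw2)
    have hdu : ∀ t ∈ Ioo 0 τ, HasDerivAt u (Zp (u t)) t := by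
      intro t ht
      have hsI : τ - t ∈ Ioo 0 τ := ⟨by linarith [ht.2], by linarith [ht.1]⟩
      have h1 := hdw (τ - t) hsI
      have h2 : HasDerivAt (fun s : ℝ => τ - s) (-1) t := (hasDerivAt_id t).const_sub τ
      have h3 : HasDerivAt (fun s => w (τ - s)) (-(W (w (τ - t)))) t := by
        have h6 := h1.scomp t h2
        simp only [Function.comp_def, neg_one_smul] at h6
        exact h6
      have h4 : HasDerivAt (fun s => (w (τ - s)).1) (-(W (w (τ - t)))).1 t := by
        simpa [Function.comp_def] using (ContinuousLinearMap.fst ℝ ℝ ℝ).hasFDerivAt.comp_hasDerivAt t h3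
      have h5 : HasDerivAt (fun s => (w (τ - s)).2) (-(W (w (τ - t)))).2 t := by
        simpa [Function.comp_def] using (ContinuousLinearMap.snd ℝ ℝ ℝ).hasFDerivAt.comp_hasDerivAt t h3
      have h7 : HasDerivAt u ((-(-(W (w (τ - t))).1), (-(W (w (τ - t)))).2)) t := h4.neg.prodMk h5
      have h8 : ((-(-(W (w (τ - t))).1), (-(W (w (τ - t)))).2) : ℝ × ℝ)
          = Zp (-(w (τ - t)).1, (w (τ - t)).2) := by
        simp only [hW, Prod.fst_neg, Prod.snd_neg, neg_neg, Prod.mk.eta]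
      rw [h8] at h7
      exact h7
    have hu02 : (u 0).2 = 0 := by
      show (w (τ - 0)).2 = 0
      simp only [sub_zero]; exact hwτ2
    have hu01 : 0 < (u 0).1 := by
      show 0 < -(w (τ - 0)).1
      simp only [sub_zero]; linarith
    have huτeq : u τ = p := by
      show ((-(w (τ - τ)).1, (w (τ - τ)).2) : ℝ × ℝ) = p
      rw [sub_self, hw0]
      exact Prod.ext (by simp) (by simp [hp2'])
    have huτ2 : (u τ).2 = 0 := by rw [huτeq]; exact hp2'
    have huτ1 : (u τ).1 < 0 := by rw [huτeq]; exact hneg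
    have hupos : ∀ t ∈ Ioo 0 τ, 0 < (u t).2 := by
      intro t ht
      show 0 < (w (τ - t)).2
      exact hwpos _ ⟨by linarith [ht.2], by linarith [ht.1]⟩
    obtain ⟨γ, T, horb, hm0, hmτ⟩ :=
      assemble_orbit Zp u τ hτ hcu hdu hu02 huτ2 hu01 huτ1 hupos
    exact ⟨γ, T, horb, huτeq ▸ hmτ⟩
  · -- p.1 > 0 : direct
    have har : p.1 < r / 1000000 := by
      have : |p.1| = p.1 := abs_of_pos hpos
      rw [← this, ← hnp]; exact hplt
    obtain ⟨τ, hτ, u, hc, hd, hu0, huτ2, huτ1, hupos⟩ :=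
      arc_lemma Zp hLip r hr hsmall p.1 hpos har
    have hu02 : (u 0).2 = 0 := by rw [hu0]
    have hu01 : 0 < (u 0).1 := by rw [hu0]; exact hpos
    obtain ⟨γ, T, horb, hm0, hmτ⟩ :=
      assemble_orbit Zp u τ hτ hc hd hu02 huτ2 hu01 huτ1 hupos
    have hpu : p = u 0 := by rw [hp, hu0]
    exact ⟨γ, T, horb, hpu ▸ hm0⟩

end AuxiliaryForCrossingCenter

/-- If the lower vector field is the reflection–time-reversal of the upper one, i.e.
`Z⁻(x,y) = (−Z⁺₁(x,−y), Z⁺₂(x,−y))`, so that the piecewise system is invariant under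
`(x,y,t) ↦ (x,−y,−t)`, then the origin is a crossing center. -/
theorem crossing_center_of_reversibility
    (Zp : ℝ × ℝ → ℝ × ℝ) (hLip : LocallyLipschitz Zp)
    (hLin : (fun p : ℝ × ℝ => Zp p - (-p.2, p.1)) =o[nhds 0] fun p : ℝ × ℝ => ‖p‖) :
    IsCrossingCenter Zp
      (fun p => (-(Zp (p.1, -p.2)).1, (Zp (p.1, -p.2)).2)) (fun p => p.2) :=
  crossing_center_aux Zp hLip hLin
end

section
/- Let l, m ∈ ℝ with 4l² + m² + 4l > 0 and set δ = √(4l² + m² + 4l). Consider the quadratic vector field Z(x,y) = (−y + l x² + m x y − l y², x(1−y)) and the function H(x,y) = (1−y)^l · ((δ−m)x/2 + l y + 1)^{(1 + m/δ)/2} · ((−δ−m)x/2 + l y + 1)^{(1 − m/δ)/2}, defined with real powers on the open set U where all three base factors 1−y, (δ−m)x/2 + ly + 1 and (−δ−m)x/2 + ly + 1 are positive (U is an open neighborhood of the origin). Then H is a first integral of Z on U: for every p ∈ U, H is differentiable at p and ∂H/∂x(p)·Z₁(p) + ∂H/∂y(p)·Z₂(p) = 0. Moreover, H(0,y) = (1−y)^l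 (l y + 1) for all y with the factors positive. -/
set_option maxHeartbeats 2000000


/-- The quadratic vector field `Z(x,y) = (−y + l x² + m x y − l y², x(1−y))`. -/
def Zq (l m : ℝ) (p : ℝ × ℝ) : ℝ × ℝ :=
  (-p.2 + l * p.1 ^ 2 + m * p.1 * p.2 - l * p.2 ^ 2, p.1 * (1 - p.2))

/-- The Darboux function
`H(x,y) = (1−y)^l ((δ−m)x/2 + ly + 1)^{(1+m/δ)/2} ((−δ−m)x/2 + ly + 1)^{(1−m/δ)/2}`,
with real powers. -/
noncomputable def Hd (l m δ : ℝ) (p : ℝ × ℝ) : ℝ :=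
  (1 - p.2) ^ l * ((δ - m) * p.1 / 2 + l * p.2 + 1) ^ ((1 + m / δ) / 2) *
    ((-δ - m) * p.1 / 2 + l * p.2 + 1) ^ ((1 - m / δ) / 2)

/-- With `δ = √(4l² + m² + 4l)`, the function `H` is a first integral of
`Z(x,y) = (−y + l x² + m x y − l y², x(1−y))` on the open set where the three base
factors are positive, and `H(0,y) = (1−y)^l (ly + 1)` there. -/
theorem darboux_first_integral_V2 (l m : ℝ) (hpos : 0 < 4 * l ^ 2 + m ^ 2 + 4 * l) :
    (∀ p : ℝ × ℝ, 0 < 1 - p.2 →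
        0 < (Real.sqrt (4 * l ^ 2 + m ^ 2 + 4 * l) - m) * p.1 / 2 + l * p.2 + 1 →
        0 < (-Real.sqrt (4 * l ^ 2 + m ^ 2 + 4 * l) - m) * p.1 / 2 + l * p.2 + 1 →
      DifferentiableAt ℝ (Hd l m (Real.sqrt (4 * l ^ 2 + m ^ 2 + 4 * l))) p ∧
        fderiv ℝ (Hd l m (Real.sqrt (4 * l ^ 2 + m ^ 2 + 4 * l))) p (Zq l m p) = 0) ∧
    (∀ y : ℝ, 0 < 1 - y → 0 < l * y + 1 →
      Hd l m (Real.sqrt (4 * l ^ 2 + m ^ 2 + 4 * l)) (0, y) = (1 - y) ^ l * (l * y + 1)) := by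
  set δ := Real.sqrt (4 * l ^ 2 + m ^ 2 + 4 * l) with hδdef
  have hδpos : 0 < δ := Real.sqrt_pos.mpr hpos
  have hδsq : δ ^ 2 = 4 * l ^ 2 + m ^ 2 + 4 * l := Real.sq_sqrt hpos.le
  constructor
  · rintro ⟨x, y⟩ h1 h2 h3
    simp only at h1 h2 h3
    set L1 : ℝ × ℝ →L[ℝ] ℝ := -(ContinuousLinearMap.snd ℝ ℝ ℝ) with hL1
    set L2 : ℝ × ℝ →L[ℝ] ℝ :=
      ((δ - m)/2) • ContinuousLinearMap.fst ℝ ℝ ℝ + l • ContinuousLinearMap.snd ℝ ℝ ℝ with hL2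
    set L3 : ℝ × ℝ →L[ℝ] ℝ :=
      ((-δ - m)/2) • ContinuousLinearMap.fst ℝ ℝ ℝ + l • ContinuousLinearMap.snd ℝ ℝ ℝ with hL3
    have hF1 : HasFDerivAt (fun p : ℝ × ℝ => 1 - p.2) L1 (x, y) := by
      have e : (fun p : ℝ × ℝ => 1 - p.2) = fun p : ℝ × ℝ => L1 p + 1 := by
        funext p; simp [hL1]; ring
      rw [e]; exact L1.hasFDerivAt.add_const 1
    have hF2 : HasFDerivAt (fun p : ℝ × ℝ => (δ - m) * p.1 / 2 + l * p.2 + 1) L2 (x, y) := by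
      have e : (fun p : ℝ × ℝ => (δ - m) * p.1 / 2 + l * p.2 + 1)
          = fun p : ℝ × ℝ => L2 p + 1 := by
        funext p; simp [hL2]; ring
      rw [e]; exact L2.hasFDerivAt.add_const 1
    have hF3 : HasFDerivAt (fun p : ℝ × ℝ => (-δ - m) * p.1 / 2 + l * p.2 + 1) L3 (x, y) := by
      have e : (fun p : ℝ × ℝ => (-δ - m) * p.1 / 2 + l * p.2 + 1)
          = fun p : ℝ × ℝ => L3 p + 1 := by
        funext p; simp [hL3]; ring
      rw [e]; exact L3.hasFDerivAt.add_const 1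
    have hG1 : HasFDerivAt (fun p : ℝ × ℝ => (1 - p.2) ^ l)
        ((l * (1 - y) ^ (l - 1)) • L1) (x, y) :=
      HasDerivAt.comp_hasFDerivAt (h₂ := fun t : ℝ => t ^ l) (x, y)
        ((Real.hasStrictDerivAt_rpow_const (Or.inl h1.ne')).hasDerivAt) hF1
    have hG2 : HasFDerivAt (fun p : ℝ × ℝ => ((δ - m) * p.1 / 2 + l * p.2 + 1) ^ ((1 + m / δ) / 2))
        ((((1 + m / δ) / 2) * ((δ - m) * x / 2 + l * y + 1) ^ ((1 + m / δ) / 2 - 1)) • L2) (x, y) :=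
      HasDerivAt.comp_hasFDerivAt (h₂ := fun t : ℝ => t ^ ((1 + m / δ) / 2)) (x, y)
        ((Real.hasStrictDerivAt_rpow_const (Or.inl h2.ne')).hasDerivAt) hF2
    have hG3 : HasFDerivAt (fun p : ℝ × ℝ => ((-δ - m) * p.1 / 2 + l * p.2 + 1) ^ ((1 - m / δ) / 2))
        ((((1 - m / δ) / 2) * ((-δ - m) * x / 2 + l * y + 1) ^ ((1 - m / δ) / 2 - 1)) • L3) (x, y) :=
      HasDerivAt.comp_hasFDerivAt (h₂ := fun t : ℝ => t ^ ((1 - m / δ) / 2)) (x, y)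
        ((Real.hasStrictDerivAt_rpow_const (Or.inl h3.ne')).hasDerivAt) hF3
    have hH : HasFDerivAt (Hd l m δ) _ (x, y) := (hG1.mul hG2).mul hG3
    refine ⟨hH.differentiableAt, ?_⟩
    rw [hH.fderiv]
    rw [Real.rpow_sub_one h1.ne', Real.rpow_sub_one h2.ne', Real.rpow_sub_one h3.ne']
    simp only [Zq, ContinuousLinearMap.add_apply, ContinuousLinearMap.smul_apply,
      ContinuousLinearMap.neg_apply, ContinuousLinearMap.coe_fst', ContinuousLinearMap.coe_snd',
      hL1, hL2, hL3, smul_eq_mul, Pi.mul_apply]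
    set A := (1 - y) ^ l with hA
    set B := ((δ - m) * x / 2 + l * y + 1) ^ ((1 + m / δ) / 2) with hB
    set C := ((-δ - m) * x / 2 + l * y + 1) ^ ((1 - m / δ) / 2) with hC
    have h2d : (δ - m) * x + l * y * 2 + 2 ≠ 0 := by intro h; nlinarith
    have h3d : (-δ - m) * x + l * y * 2 + 2 ≠ 0 := by intro h; nlinarith
    have h2d' : 2 + δ * x - m * x + y * l * 2 ≠ 0 := by intro h; nlinarith
    have h3d' : 2 - δ * x - m * x + y * l * 2 ≠ 0 := by intro h; nlinarith
    field_simp [h2d, h3d, h2d', h3d']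
    have h2e : (δ - m) * x + 2 * l * y + 2 ≠ 0 := by intro h; nlinarith
    have h3e : (-δ - m) * x + 2 * l * y + 2 ≠ 0 := by intro h; nlinarith
    rw [← add_assoc, div_add_div _ _ h3e h2e, div_add' _ _ _ (mul_ne_zero h3e h2e), mul_zero, mul_eq_zero,
      div_eq_zero_iff]
    right; left
    linear_combination (2 * δ * x * (y - m * x * y + l * y ^ 2)) * hδsq
  · intro y h1 h2
    have e2 : (δ - m) * (0:ℝ) / 2 + l * y + 1 = l * y + 1 := by ring
    have e3 : (-δ - m) * (0:ℝ) / 2 + l * y + 1 = l * y + 1 := by ring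
    simp only [Hd, e2, e3]
    rw [mul_assoc, ← Real.rpow_add h2]
    rw [show (1 + m / δ) / 2 + (1 - m / δ) / 2 = 1 by ring, Real.rpow_one]
end

section
/- In the polynomial ring ℝ[l, m₁, m₂, n₁, n₂] (multivariate polynomials over ℝ in five variables), the ideal generated by the three polynomials g₁ = m₁ − m₂, g₂ = m₂(2l + n₁ + n₂) and g₃ = m₂(n₁ − n₂)(6l + 4n₁ + 4n₂ − 1) is a radical ideal. -/
open MvPolynomial

noncomputable section LyapunovAux

/-- Abbreviation for the ambient polynomial ring `ℝ[l, m₁, m₂, n₁, n₂]`. -/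
abbrev R5 := MvPolynomial (Fin 5) ℝ

/-- Division with remainder along a substitution: `f - (aeval v) f` always lies in any ideal
containing all the differences `X i - v i`. -/
lemma sub_aeval_mem (J : Ideal R5) (v : Fin 5 → R5) (h : ∀ i, X i - v i ∈ J)
    (f : R5) : f - aeval v f ∈ J := by
  induction f using MvPolynomial.induction_on with
  | C a => simp [aeval_C, algebraMap_eq]
  | add p q hp hq =>
      have he : p + q - aeval v (p + q) = (p - aeval v p) + (q - aeval v q) := by
        rw [map_add]; ring
      rw [he]; exact J.add_mem hp hq
  | mul_X p i hp =>
      have he : p * X i - aeval v (p * X i)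
          = (p - aeval v p) * X i + aeval v p * (X i - v i) := by
        rw [map_mul, aeval_X]; ring
      rw [he]; exact J.add_mem (J.mul_mem_right _ hp) (J.mul_mem_left _ (h i))

/-- If a substitution `v` kills all generators of an ideal and `X i - v i` lies in the
ideal generated by the variables in `s`, then any `r` with `r ^ 2` in the ideal lies in
the span of the variables in `s`. -/
lemma radical_step (v : Fin 5 → R5) (s : Set (Fin 5))
    (hv : ∀ i, X i - v i ∈ Ideal.span (X '' s))
    {S : Set R5} (hg : ∀ g ∈ S, aeval v g = 0) {r : R5} (hr : r ^ 2 ∈ Ideal.span S) :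
    r ∈ Ideal.span (X '' s) := by
  have hker : Ideal.span S ≤ RingHom.ker (aeval v : R5 →ₐ[ℝ] R5) :=
    Ideal.span_le.mpr fun g hgS => RingHom.mem_ker.mpr (hg g hgS)
  have h2 : (aeval v r) ^ 2 = 0 := by
    rw [← map_pow]; exact RingHom.mem_ker.mp (hker hr)
  have h0 : aeval v r = 0 := pow_eq_zero_iff two_ne_zero |>.mp h2
  have := sub_aeval_mem (Ideal.span (X '' s)) v hv r
  rwa [h0, sub_zero] at this

def vv1 : Fin 5 → R5 := fun i => match i with
  | 0 => X 0 | 1 => 0 | 2 => 0 | 3 => X 3 | 4 => X 4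
def vv2 : Fin 5 → R5 := fun i => match i with
  | 0 => 0 | 1 => 0 | 2 => X 2 | 3 => 0 | 4 => X 4
def vv3 : Fin 5 → R5 := fun i => match i with
  | 0 => 0 | 1 => 0 | 2 => X 2 | 3 => X 3 | 4 => 0

lemma Xeq (i : Fin 5) : (X i : R5) = monomial (Finsupp.single i 1) 1 := by
  simpa using (X_pow_eq_monomial (n := i) (e := 1) (R := ℝ))

/-- The square-free monomial ideal `(x₁, x₀x₂, x₂x₃x₄)` is radical. -/
lemma M_isRadical :
    (Ideal.span {(X 1 : R5), X 0 * X 2, X 2 * X 3 * X 4}).IsRadical := by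
  rw [Ideal.isRadical_iff_pow_one_lt 2 one_lt_two]
  intro r hr
  have h1 : r ∈ Ideal.span (X '' ({1, 2} : Set (Fin 5)) : Set R5) := by
    refine radical_step vv1 _ ?_ ?_ hr
    · intro i
      fin_cases i
      · simp [vv1]
      · simp only [vv1, sub_zero]; exact Ideal.subset_span ⟨1, by decide, rfl⟩
      · simp only [vv1, sub_zero]; exact Ideal.subset_span ⟨2, by decide, rfl⟩
      · simp [vv1]
      · simp [vv1]
    · intro g hg
      rcases hg with rfl | rfl | rfl <;> simp [vv1]
  have h2 : r ∈ Ideal.span (X '' ({0, 1, 3} : Set (Fin 5)) : Set R5) := by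
    refine radical_step vv2 _ ?_ ?_ hr
    · intro i
      fin_cases i
      · simp only [vv2, sub_zero]; exact Ideal.subset_span ⟨0, by decide, rfl⟩
      · simp only [vv2, sub_zero]; exact Ideal.subset_span ⟨1, by decide, rfl⟩
      · simp [vv2]
      · simp only [vv2, sub_zero]; exact Ideal.subset_span ⟨3, by decide, rfl⟩
      · simp [vv2]
    · intro g hg
      rcases hg with rfl | rfl | rfl <;> simp [vv2]
  have h3 : r ∈ Ideal.span (X '' ({0, 1, 4} : Set (Fin 5)) : Set R5) := by
    refine radical_step vv3 _ ?_ ?_ hr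
    · intro i
      fin_cases i
      · simp only [vv3, sub_zero]; exact Ideal.subset_span ⟨0, by decide, rfl⟩
      · simp only [vv3, sub_zero]; exact Ideal.subset_span ⟨1, by decide, rfl⟩
      · simp [vv3]
      · simp [vv3]
      · simp only [vv3, sub_zero]; exact Ideal.subset_span ⟨4, by decide, rfl⟩
    · intro g hg
      rcases hg with rfl | rfl | rfl <;> simp [vv3]
  rw [mem_ideal_span_X_image] at h1 h2 h3
  have e2 : (X 0 * X 2 : R5) = monomial (Finsupp.single 0 1 + Finsupp.single 2 1) 1 := by
    rw [Xeq 0, Xeq 2, monomial_mul, mul_one]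
  have e3 : (X 2 * X 3 * X 4 : R5)
      = monomial (Finsupp.single 2 1 + Finsupp.single 3 1 + Finsupp.single 4 1) 1 := by
    rw [Xeq 2, Xeq 3, Xeq 4, monomial_mul, monomial_mul, mul_one, mul_one]
  have hset : ({(X 1 : R5), X 0 * X 2, X 2 * X 3 * X 4} : Set R5)
      = (fun s => monomial s (1 : ℝ)) ''
        {Finsupp.single 1 1, Finsupp.single 0 1 + Finsupp.single 2 1,
         Finsupp.single 2 1 + Finsupp.single 3 1 + Finsupp.single 4 1} := by
    rw [Set.image_insert_eq, Set.image_insert_eq, Set.image_singleton]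
    rw [← Xeq 1, ← e2, ← e3]
  rw [hset, mem_ideal_span_monomial_image]
  intro m hm
  obtain ⟨i1, hi1s, hi1⟩ := h1 m hm
  obtain ⟨i2, hi2s, hi2⟩ := h2 m hm
  obtain ⟨i3, hi3s, hi3⟩ := h3 m hm
  by_cases hm1 : m 1 ≠ 0
  · exact ⟨Finsupp.single 1 1, by simp,
      Finsupp.single_le_iff.mpr (Nat.one_le_iff_ne_zero.mpr hm1)⟩
  push_neg at hm1
  have hm2 : m 2 ≠ 0 := by
    rcases hi1s with rfl | rfl
    · exact absurd hm1 hi1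
    · exact hi1
  by_cases hm0 : m 0 ≠ 0
  · refine ⟨Finsupp.single 0 1 + Finsupp.single 2 1, by simp, ?_⟩
    rw [Finsupp.le_def]
    intro j
    fin_cases j <;>
      simp [Finsupp.single_apply, Nat.one_le_iff_ne_zero, hm0, hm2]
  push_neg at hm0
  have hm3 : m 3 ≠ 0 := by
    rcases hi2s with rfl | rfl | rfl
    · exact absurd hm0 hi2
    · exact absurd hm1 hi2
    · exact hi2
  have hm4 : m 4 ≠ 0 := by
    rcases hi3s with rfl | rfl | rfl
    · exact absurd hm0 hi3
    · exact absurd hm1 hi3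
    · exact hi3
  refine ⟨Finsupp.single 2 1 + Finsupp.single 3 1 + Finsupp.single 4 1, by simp, ?_⟩
  rw [Finsupp.le_def]
  intro j
  fin_cases j <;>
    simp [Finsupp.single_apply, Nat.one_le_iff_ne_zero, hm2, hm3, hm4]

/-- The forward affine change of variables. -/
def vF : Fin 5 → R5 := fun i => match i with
  | 0 => C (2⁻¹ : ℝ) * (X 0 - X 4 - 1)
  | 1 => X 1 + X 2
  | 2 => X 2
  | 3 => C (2⁻¹ : ℝ) * (X 3 + X 4 + 1)
  | 4 => C (2⁻¹ : ℝ) * (X 4 + 1 - X 3)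

/-- The inverse affine change of variables. -/
def vG : Fin 5 → R5 := fun i => match i with
  | 0 => 2 * X 0 + X 3 + X 4
  | 1 => X 1 - X 2
  | 2 => X 2
  | 3 => X 3 - X 4
  | 4 => X 3 + X 4 - 1

def Fh : R5 →ₐ[ℝ] R5 := aeval vF
def Gh : R5 →ₐ[ℝ] R5 := aeval vG

lemma hC2 : (C (2⁻¹ : ℝ) : R5) * 2 = 1 := by
  rw [show (2 : R5) = C (2 : ℝ) from (map_ofNat C 2).symm, ← C_mul]
  norm_num

lemma hGF : ∀ f : R5, Gh (Fh f) = f := by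
  have h : Gh.comp Fh = AlgHom.id ℝ R5 := by
    apply algHom_ext
    intro i
    fin_cases i
    · simp [Fh, Gh, vF, vG, algebraMap_eq]
      linear_combination (X (0 : Fin 5) : R5) * hC2
    · simp [Fh, Gh, vF, vG, algebraMap_eq]
    · simp [Fh, Gh, vF, vG, algebraMap_eq]
    · simp [Fh, Gh, vF, vG, algebraMap_eq]
      linear_combination (X (3 : Fin 5) : R5) * hC2
    · simp [Fh, Gh, vF, vG, algebraMap_eq]
      linear_combination (X (4 : Fin 5) : R5) * hC2
  intro f
  exact congrArg (fun g => g f) h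

end LyapunovAux

/-- In `ℝ[l, m₁, m₂, n₁, n₂]` (with `l = X 0`, `m₁ = X 1`, `m₂ = X 2`, `n₁ = X 3`,
`n₂ = X 4`), the ideal generated by the Lyapunov quantities
`g₁ = m₁ − m₂`, `g₂ = m₂(2l + n₁ + n₂)` and `g₃ = m₂(n₁ − n₂)(6l + 4n₁ + 4n₂ − 1)`
is radical. -/
theorem lyapunov_ideal_is_radical :
    (Ideal.span
      {(X 1 - X 2 : MvPolynomial (Fin 5) ℝ),
       X 2 * (2 * X 0 + X 3 + X 4),
       X 2 * (X 3 - X 4) * (6 * X 0 + 4 * X 3 + 4 * X 4 - 1)}).IsRadical := by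
  set M : Ideal R5 := Ideal.span {(X 1 : R5), X 0 * X 2, X 2 * X 3 * X 4} with hM
  have hX1 : (X 1 : R5) ∈ M := Ideal.subset_span (by simp)
  have hX02 : (X 0 * X 2 : R5) ∈ M := Ideal.subset_span (by simp)
  have hX234 : (X 2 * X 3 * X 4 : R5) ∈ M := Ideal.subset_span (by simp)
  have key : Ideal.span
      {(X 1 - X 2 : MvPolynomial (Fin 5) ℝ),
       X 2 * (2 * X 0 + X 3 + X 4),
       X 2 * (X 3 - X 4) * (6 * X 0 + 4 * X 3 + 4 * X 4 - 1)} = Ideal.comap Fh M := by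
    apply le_antisymm
    · rw [Ideal.span_le]
      rintro g (rfl | rfl | rfl) <;> rw [SetLike.mem_coe, Ideal.mem_comap]
      · have : Fh (X 1 - X 2) = X 1 := by
          simp [Fh, vF]
        rw [this]; exact hX1
      · have : Fh (X 2 * (2 * X 0 + X 3 + X 4)) = X 0 * X 2 := by
          simp [Fh, vF, map_ofNat]
          linear_combination (X (2 : Fin 5) * X 0 : R5) * hC2
        rw [this]; exact hX02
      · have : Fh (X 2 * (X 3 - X 4) * (6 * X 0 + 4 * X 3 + 4 * X 4 - 1))
            = 3 * X 3 * (X 0 * X 2) + X 2 * X 3 * X 4 := by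
          simp [Fh, vF, map_ofNat]
          linear_combination (X (2 : Fin 5) * X 3 *
            (3 * X 0 * (C (2⁻¹ : ℝ) * 2 + 1) + X 4 * (C (2⁻¹ : ℝ) * 2 + 1)
              + C (2⁻¹ : ℝ) * 2) : R5) * hC2
        rw [this]
        exact M.add_mem (M.mul_mem_left _ hX02) hX234
    · intro x hx
      rw [Ideal.mem_comap] at hx
      have hmem := Ideal.mem_map_of_mem Gh hx
      rw [hGF x] at hmem
      refine Ideal.map_le_of_le_comap ?_ hmem
      rw [hM, Ideal.span_le]
      rintro g (rfl | rfl | rfl) <;> rw [SetLike.mem_coe, Ideal.mem_comap]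
      · have : Gh (X 1) = X 1 - X 2 := by simp [Gh, vG]
        rw [this]; exact Ideal.subset_span (by simp)
      · have : Gh (X 0 * X 2) = X 2 * (2 * X 0 + X 3 + X 4) := by
          simp [Gh, vG]; ring
        rw [this]; exact Ideal.subset_span (by simp)
      · have : Gh (X 2 * X 3 * X 4)
            = X 2 * (X 3 - X 4) * (6 * X 0 + 4 * X 3 + 4 * X 4 - 1)
              - 3 * (X 3 - X 4) * (X 2 * (2 * X 0 + X 3 + X 4)) := by
          simp [Gh, vG]; ring
        rw [this]
        refine Ideal.sub_mem _ (Ideal.subset_span (by simp))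
          (Ideal.mul_mem_left _ _ (Ideal.subset_span (by simp)))
  rw [key]
  exact M_isRadical.comap Fh
end

section
/- For real numbers l, m₁, m₂, n₁, n₂, the three equations m₁ − m₂ = 0, m₂(2l + n₁ + n₂) = 0 and m₂(n₁ − n₂)(6l + 4n₁ + 4n₂ − 1) = 0 hold simultaneously if and only if one of the following holds: (i) m₁ = m₂ = 0; (ii) m₁ = m₂, n₁ = −l and n₂ = −l; (iii) 2l + 1 = 0, m₁ = m₂ and n₁ + n₂ = 1. -/
/-- The common vanishing of the Lyapunov quantities `W₂, W₃, W₄` of the continuous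
horizontal family characterizes the three center conditions. -/
theorem lyapunov_vanishing_characterization_continuous (l m₁ m₂ n₁ n₂ : ℝ) :
    (m₁ - m₂ = 0 ∧ m₂ * (2 * l + n₁ + n₂) = 0 ∧
      m₂ * (n₁ - n₂) * (6 * l + 4 * n₁ + 4 * n₂ - 1) = 0) ↔
      (m₁ = 0 ∧ m₂ = 0) ∨
      (m₁ = m₂ ∧ n₁ = -l ∧ n₂ = -l) ∨
      (2 * l + 1 = 0 ∧ m₁ = m₂ ∧ n₁ + n₂ = 1) := by
  constructor
  · rintro ⟨h1, h2, h3⟩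
    have hm : m₁ = m₂ := by linarith
    rcases eq_or_ne m₂ 0 with hz | hz
    · exact Or.inl ⟨hm.trans hz, hz⟩
    · have e2 : 2 * l + n₁ + n₂ = 0 := by
        rcases mul_eq_zero.mp h2 with h | h
        · exact absurd h hz
        · exact h
      have e3 : (n₁ - n₂) * (6 * l + 4 * n₁ + 4 * n₂ - 1) = 0 := by
        rcases mul_eq_zero.mp h3 with h | h
        · rcases mul_eq_zero.mp h with h | h
          · exact absurd h hz
          · rw [h]; ring
        · rw [h]; ring
      rcases mul_eq_zero.mp e3 with h | h
      · exact Or.inr (Or.inl ⟨hm, by linarith, by linarith⟩)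
      · exact Or.inr (Or.inr ⟨by linarith, hm, by linarith⟩)
  · rintro (⟨h1, h2⟩ | ⟨h1, h2, h3⟩ | ⟨h1, h2, h3⟩)
    · subst h1; subst h2; exact ⟨by ring, by ring, by ring⟩
    · subst h2; subst h3; exact ⟨by linarith, by ring, by ring⟩
    · have hl : l = -(1/2) := by linarith
      subst hl
      exact ⟨by linarith, by rw [show 2*(-(1/2))+n₁+n₂ = n₁+n₂-1 by ring, h3]; ring,
        by rw [show 6*(-(1/2))+4*n₁+4*n₂-1 = 4*(n₁+n₂-1) by ring, h3]; ring⟩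
end

section
/- For real numbers l₁, l₂, m₁, m₂, n₁, n₂, the five equations m₁ − m₂ = 0, m₂(l₁ + l₂ + n₁ + n₂) = 0, m₂(l₁ + l₂ + 1)(3l₁ + l₂ + 4n₂) = 0, m₂(l₁ + l₂ + 1)(l₁ − l₂)² = 0 and m₂(l₂ + 2)(l₂ − 1)(l₁ + l₂ + 1)(l₁ − l₂) = 0 hold simultaneously if and only if one of the following holds: (i) m₁ = m₂ = 0; (ii) l₁ = l₂, m₁ = m₂, n₁ = −l₁ and n₂ = −l₁; (iii) l₁ + l₂ + 1 = 0, m₁ = m₂ and n₁ + n₂ = 1. -/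
/-- The common vanishing of the Lyapunov quantities `W₂, …, W₆` of the discontinuous
horizontal family characterizes the three center conditions. -/
theorem lyapunov_vanishing_characterization_discontinuous (l₁ l₂ m₁ m₂ n₁ n₂ : ℝ) :
    (m₁ - m₂ = 0 ∧
      m₂ * (l₁ + l₂ + n₁ + n₂) = 0 ∧
      m₂ * (l₁ + l₂ + 1) * (3 * l₁ + l₂ + 4 * n₂) = 0 ∧
      m₂ * (l₁ + l₂ + 1) * (l₁ - l₂) ^ 2 = 0 ∧
      m₂ * (l₂ + 2) * (l₂ - 1) * (l₁ + l₂ + 1) * (l₁ - l₂) = 0) ↔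
      (m₁ = 0 ∧ m₂ = 0) ∨
      (l₁ = l₂ ∧ m₁ = m₂ ∧ n₁ = -l₁ ∧ n₂ = -l₁) ∨
      (l₁ + l₂ + 1 = 0 ∧ m₁ = m₂ ∧ n₁ + n₂ = 1) := by
  constructor
  · rintro ⟨h1, h2, h3, h4, h5⟩
    have hm : m₁ = m₂ := by linarith
    by_cases hm2 : m₂ = 0
    · exact Or.inl ⟨by rw [hm, hm2], hm2⟩
    by_cases hs : l₁ + l₂ + 1 = 0
    · refine Or.inr (Or.inr ⟨hs, hm, ?_⟩)
      have := mul_eq_zero.mp h2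
      rcases this with h | h
      · exact absurd h hm2
      · linarith
    · refine Or.inr (Or.inl ?_)
      have h4' : (l₁ - l₂) ^ 2 = 0 := by
        rcases mul_eq_zero.mp h4 with h | h
        · rcases mul_eq_zero.mp h with h | h
          · exact absurd h hm2
          · exact absurd h hs
        · exact h
      have hl : l₁ = l₂ := by
        have := pow_eq_zero_iff (n := 2) (by norm_num) |>.mp h4'
        linarith
      have h3' : 3 * l₁ + l₂ + 4 * n₂ = 0 := by
        rcases mul_eq_zero.mp h3 with h | h
        · rcases mul_eq_zero.mp h with h | h
          · exact absurd h hm2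
          · exact absurd h hs
        · exact h
      have hn2 : n₂ = -l₁ := by rw [← hl] at h3'; linarith
      have h2' : l₁ + l₂ + n₁ + n₂ = 0 := by
        rcases mul_eq_zero.mp h2 with h | h
        · exact absurd h hm2
        · exact h
      exact ⟨hl, hm, by rw [← hl] at h2'; linarith, hn2⟩
  · rintro (⟨h1, h2⟩ | ⟨h1, h2, h3, h4⟩ | ⟨h1, h2, h3⟩)
    · subst_vars; exact ⟨by ring, by ring, by ring, by ring, by ring⟩
    · subst_vars; exact ⟨by ring, by ring, by ring, by ring, by ring⟩
    · refine ⟨by linarith, ?_, ?_, ?_, ?_⟩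
      · linear_combination m₂ * h1 + m₂ * h3
      · linear_combination m₂ * (3 * l₁ + l₂ + 4 * n₂) * h1
      · linear_combination m₂ * (l₁ - l₂) ^ 2 * h1
      · linear_combination m₂ * (l₂ + 2) * (l₂ - 1) * (l₁ - l₂) * h1
end
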